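/- For a Gaussian mixture density g = Σ_{i∈[n]} c_i γ_i (with c_i ≥ 0 summing to 1, γ_i the density of N(μ_i, β²I_d)), the differential entropy satisfies h(g) ≥ (d/2)log(4πβ²) − Σ_i c_i log(Σ_j c_j exp(−‖μ_i − μ_j‖²/(4β²))). -/

import Mathlib

open MeasureTheory Real

/-- The density of the Gaussian `N(μ, β²I_d)` on `ℝ^d`. -/
noncomputable def gaussPdf {d : ℕ} (β : ℝ) (μ t : EuclideanSpace ℝ (Fin d)) : ℝ :=
  (2 * π * β ^ 2) ^ (-(d : ℝ) / 2) * Real.exp (-‖t - μ‖ ^ 2 / (2 * β ^ 2))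

/-- Differential entropy `h(g) = −∫ g log g` of a density on `ℝ^d`. -/
noncomputable def diffEnt {d : ℕ} (g : EuclideanSpace ℝ (Fin d) → ℝ) : ℝ :=
  -∫ t, g t * Real.log (g t)

section aux
variable {d : ℕ}

local notation "V" => EuclideanSpace ℝ (Fin d)

lemma integrable_rexp_neg_mul_sq_norm {b : ℝ} (hb : 0 < b) :
    Integrable (fun v : V => rexp (-b * ‖v‖ ^ 2)) := by
  have h := (GaussianFourier.integrable_cexp_neg_mul_sq_norm_add
    (b := (b : ℂ)) (by simpa using hb) 0 (0 : EuclideanSpace ℝ (Fin d))).norm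
  refine h.congr (Filter.Eventually.of_forall fun v => ?_)
  simp only [zero_mul, add_zero, Complex.norm_exp]
  rw [show (-(b:ℂ) * (‖v‖:ℂ) ^ 2) = ((-b * ‖v‖ ^ 2 : ℝ) : ℂ) by push_cast; ring,
    Complex.ofReal_re]

lemma integral_rexp_neg_mul_sq_norm' {b : ℝ} (hb : 0 < b) :
    ∫ v : V, rexp (-b * ‖v‖ ^ 2) = (π / b) ^ ((d : ℝ) / 2) := by
  rw [GaussianFourier.integral_rexp_neg_mul_sq_norm hb]
  simp

lemma integral_rexp_neg_mul_sq_norm_sub {b : ℝ} (hb : 0 < b) (m : V) :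
    ∫ t : V, rexp (-b * ‖t - m‖ ^ 2) = (π / b) ^ ((d : ℝ) / 2) := by
  rw [integral_sub_right_eq_self (fun v => rexp (-b * ‖v‖ ^ 2)) m]
  exact integral_rexp_neg_mul_sq_norm' hb

lemma integrable_rexp_neg_mul_sq_norm_sub {b : ℝ} (hb : 0 < b) (m : V) :
    Integrable (fun t : V => rexp (-b * ‖t - m‖ ^ 2)) :=
  (integrable_rexp_neg_mul_sq_norm hb).comp_sub_right m

lemma integrable_sq_norm_mul_rexp {b : ℝ} (hb : 0 < b) :
    Integrable (fun v : V => ‖v‖ ^ 2 * rexp (-b * ‖v‖ ^ 2)) := by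
  refine Integrable.mono ((integrable_rexp_neg_mul_sq_norm (half_pos hb)).const_mul (2 / b))
    (Continuous.aestronglyMeasurable (by fun_prop)) (Filter.Eventually.of_forall fun v => ?_)
  have h0 : (0:ℝ) ≤ ‖v‖ ^ 2 := by positivity
  rw [Real.norm_eq_abs, abs_of_nonneg (by positivity), Real.norm_eq_abs,
    abs_of_nonneg (by positivity)]
  have h1 : ‖v‖ ^ 2 ≤ 2 / b * rexp (b / 2 * ‖v‖ ^ 2) := by
    have h := Real.add_one_le_exp (b / 2 * ‖v‖ ^ 2)
    have h2 := mul_le_mul_of_nonneg_left h (by positivity : (0:ℝ) ≤ 2 / b)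
    have h3 : 2 / b * (b / 2 * ‖v‖ ^ 2 + 1) = ‖v‖ ^ 2 + 2 / b := by field_simp
    have h4 : (0:ℝ) < 2 / b := by positivity
    linarith
  calc ‖v‖ ^ 2 * rexp (-b * ‖v‖ ^ 2)
      ≤ 2 / b * rexp (b / 2 * ‖v‖ ^ 2) * rexp (-b * ‖v‖ ^ 2) := by
        exact mul_le_mul_of_nonneg_right h1 (Real.exp_pos _).le
    _ = 2 / b * rexp (-(b / 2) * ‖v‖ ^ 2) := by
        rw [mul_assoc, ← Real.exp_add]; ring_nf

lemma integrable_sq_norm_sub_mul_rexp {b : ℝ} (hb : 0 < b) (w m : V) :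
    Integrable (fun t : V => ‖t - w‖ ^ 2 * rexp (-b * ‖t - m‖ ^ 2)) := by
  have base : Integrable (fun v : V => ‖v - (w - m)‖ ^ 2 * rexp (-b * ‖v‖ ^ 2)) := by
    refine Integrable.mono (((integrable_sq_norm_mul_rexp hb).const_mul 2).add
      ((integrable_rexp_neg_mul_sq_norm hb).const_mul (2 * ‖w - m‖ ^ 2)))
      (Continuous.aestronglyMeasurable (by fun_prop)) (Filter.Eventually.of_forall fun v => ?_)
    have he := (Real.exp_pos (-b * ‖v‖ ^ 2)).le
    rw [Real.norm_eq_abs, abs_of_nonneg (by positivity), Real.norm_eq_abs]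
    have h2 : ‖v - (w - m)‖ ^ 2 ≤ 2 * ‖v‖ ^ 2 + 2 * ‖w - m‖ ^ 2 := by
      have h := norm_sub_le v (w - m)
      nlinarith [norm_nonneg v, norm_nonneg (w - m), norm_nonneg (v - (w - m)),
        sq_nonneg (‖v‖ - ‖w - m‖)]
    calc ‖v - (w - m)‖ ^ 2 * rexp (-b * ‖v‖ ^ 2)
        ≤ (2 * ‖v‖ ^ 2 + 2 * ‖w - m‖ ^ 2) * rexp (-b * ‖v‖ ^ 2) :=
          mul_le_mul_of_nonneg_right h2 he
      _ = 2 * (‖v‖ ^ 2 * rexp (-b * ‖v‖ ^ 2)) + 2 * ‖w - m‖ ^ 2 * rexp (-b * ‖v‖ ^ 2) := by ring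
      _ ≤ _ := le_abs_self _
  have := base.comp_sub_right m
  refine this.congr (Filter.Eventually.of_forall fun t => ?_)
  simp only []
  congr 2
  abel_nf

lemma continuous_gaussPdf (β : ℝ) (μ : V) : Continuous (gaussPdf β μ) := by
  unfold gaussPdf
  fun_prop

variable {β : ℝ}

lemma gaussPdf_pos (hβ : 0 < β) (μ t : V) : 0 < gaussPdf β μ t := by
  unfold gaussPdf
  positivity

lemma gaussPdf_le (hβ : 0 < β) (μ t : V) :
    gaussPdf β μ t ≤ (2 * π * β ^ 2) ^ (-(d : ℝ) / 2) := by
  unfold gaussPdf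
  nth_rewrite 2 [show (2 * π * β ^ 2) ^ (-(d : ℝ) / 2)
    = (2 * π * β ^ 2) ^ (-(d : ℝ) / 2) * 1 by ring]
  refine mul_le_mul_of_nonneg_left ?_ (by positivity)
  rw [show (1:ℝ) = rexp 0 by simp]
  apply Real.exp_le_exp.2
  have : (0:ℝ) < 2 * β ^ 2 := by positivity
  rw [div_nonpos_iff]
  right
  constructor <;> [skip; positivity]
  simp [sq_nonneg]

lemma gaussPdf_eq (μ : V) : gaussPdf β μ =
    fun t => (2 * π * β ^ 2) ^ (-(d : ℝ) / 2) * rexp (-(2 * β ^ 2)⁻¹ * ‖t - μ‖ ^ 2) := by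
  funext t
  unfold gaussPdf
  congr 1
  rw [div_eq_mul_inv, neg_mul, neg_mul, mul_comm]

lemma integrable_gaussPdf (hβ : 0 < β) (μ : V) : Integrable (gaussPdf β μ) := by
  rw [gaussPdf_eq]
  exact (integrable_rexp_neg_mul_sq_norm_sub (by positivity) μ).const_mul _

lemma integral_gaussPdf (hβ : 0 < β) (μ : V) : ∫ t, gaussPdf β μ t = 1 := by
  rw [gaussPdf_eq]
  rw [integral_const_mul, integral_rexp_neg_mul_sq_norm_sub (by positivity) μ]
  have h1 : π / (2 * β ^ 2)⁻¹ = 2 * π * β ^ 2 := by field_simp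
  rw [h1, ← Real.rpow_add (by positivity),
    show (-(d:ℝ) / 2 + (d:ℝ) / 2) = 0 by ring, Real.rpow_zero]

lemma sq_norm_sub_add (p q t : V) :
    ‖t - p‖ ^ 2 + ‖t - q‖ ^ 2
      = 2 * ‖t - (2⁻¹ : ℝ) • (p + q)‖ ^ 2 + ‖p - q‖ ^ 2 / 2 := by
  have h : ∀ x y : V, ‖x - y‖ ^ 2 = ‖x‖ ^ 2 - 2 * inner ℝ x y + ‖y‖ ^ 2 :=
    fun x y => norm_sub_sq_real x y
  rw [h t p, h t q, h p q, h t ((2⁻¹ : ℝ) • (p + q)), real_inner_smul_right,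
    inner_add_right, norm_smul, mul_pow, norm_add_sq_real]
  simp only [norm_inv, Real.norm_ofNat]
  ring

lemma gaussPdf_mul (hβ : 0 < β) (p q t : V) :
    gaussPdf β p t * gaussPdf β q t =
      ((2 * π * β ^ 2) ^ (-(d : ℝ)) * rexp (-‖p - q‖ ^ 2 / (4 * β ^ 2))) *
        rexp (-(β ^ 2)⁻¹ * ‖t - (2⁻¹ : ℝ) • (p + q)‖ ^ 2) := by
  unfold gaussPdf
  rw [show ((2 * π * β ^ 2) ^ (-(d : ℝ) / 2) * rexp (-‖t - p‖ ^ 2 / (2 * β ^ 2))) *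
      ((2 * π * β ^ 2) ^ (-(d : ℝ) / 2) * rexp (-‖t - q‖ ^ 2 / (2 * β ^ 2)))
      = ((2 * π * β ^ 2) ^ (-(d : ℝ) / 2) * (2 * π * β ^ 2) ^ (-(d : ℝ) / 2)) *
        (rexp (-‖t - p‖ ^ 2 / (2 * β ^ 2)) * rexp (-‖t - q‖ ^ 2 / (2 * β ^ 2))) by ring]
  rw [← Real.rpow_add (by positivity), ← Real.exp_add,
    show (-(d:ℝ) / 2 + -(d:ℝ) / 2) = -(d:ℝ) by ring,
    mul_assoc ((2 * π * β ^ 2 : ℝ) ^ (-(d:ℝ))), ← Real.exp_add]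
  congr 1
  rw [Real.exp_eq_exp]
  have key := sq_norm_sub_add p q t
  have hb2 : (0:ℝ) < β ^ 2 := by positivity
  set A := ‖t - p‖ ^ 2
  set B := ‖t - q‖ ^ 2
  set C := ‖t - (2⁻¹ : ℝ) • (p + q)‖ ^ 2
  set D := ‖p - q‖ ^ 2
  field_simp
  linear_combination (-4 : ℝ) * key

lemma integrable_gaussPdf_mul (hβ : 0 < β) (p q : V) :
    Integrable (fun t => gaussPdf β p t * gaussPdf β q t) := by
  simp only [gaussPdf_mul hβ]
  exact (integrable_rexp_neg_mul_sq_norm_sub (by positivity) _).const_mul _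

lemma integral_gaussPdf_mul (hβ : 0 < β) (p q : V) :
    ∫ t, gaussPdf β p t * gaussPdf β q t =
      (4 * π * β ^ 2) ^ (-(d : ℝ) / 2) * rexp (-‖p - q‖ ^ 2 / (4 * β ^ 2)) := by
  simp only [gaussPdf_mul hβ]
  rw [integral_const_mul, integral_rexp_neg_mul_sq_norm_sub (by positivity) _]
  have h1 : π / (β ^ 2)⁻¹ = π * β ^ 2 := by field_simp
  rw [h1]
  rw [show ((2 * π * β ^ 2) ^ (-(d : ℝ)) * rexp (-‖p - q‖ ^ 2 / (4 * β ^ 2))) *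
      (π * β ^ 2) ^ ((d : ℝ) / 2)
      = ((2 * π * β ^ 2) ^ (-(d : ℝ)) * (π * β ^ 2) ^ ((d : ℝ) / 2)) *
        rexp (-‖p - q‖ ^ 2 / (4 * β ^ 2)) by ring]
  congr 1
  have h2 : (2 * π * β ^ 2 : ℝ) ^ (-(d : ℝ)) = ((2 * π * β ^ 2) ^ (2:ℝ)) ^ (-(d : ℝ) / 2) := by
    rw [← Real.rpow_mul (by positivity)]
    congr 1; ring
  have h3 : (π * β ^ 2 : ℝ) ^ ((d : ℝ) / 2) = ((π * β ^ 2)⁻¹) ^ (-(d : ℝ) / 2) := by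
    rw [← Real.rpow_neg_one, ← Real.rpow_mul (by positivity)]
    congr 1
    ring
  rw [h2, h3, ← Real.mul_rpow (by positivity) (by positivity)]
  congr 1
  rw [show ((2 * π * β ^ 2 : ℝ)) ^ (2:ℝ) = (2 * π * β ^ 2) * (2 * π * β ^ 2) by
    rw [show (2:ℝ) = ((2:ℕ):ℝ) by norm_num, Real.rpow_natCast]; ring]
  have hπ : (0:ℝ) < π := pi_pos
  field_simp
  ring

end aux

section aux2
variable {d : ℕ} {β : ℝ}
local notation "V" => EuclideanSpace ℝ (Fin d)

lemma log_gaussPdf (hβ : 0 < β) (μ t : V) :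
    Real.log (gaussPdf β μ t)
      = Real.log ((2 * π * β ^ 2) ^ (-(d : ℝ) / 2)) + (-‖t - μ‖ ^ 2 / (2 * β ^ 2)) := by
  unfold gaussPdf
  rw [Real.log_mul (by positivity) (Real.exp_pos _).ne', Real.log_exp]

end aux2

/-- Jensen lower bound of Huber et al. on the differential entropy of a Gaussian mixture:
`h(g) ≥ (d/2)log(4πβ²) − Σ_i c_i log(Σ_j c_j exp(−‖μ_i − μ_j‖²/(4β²)))`. -/
theorem diffEnt_mixture_ge_jensen {d n : ℕ} (β : ℝ) (hβ : 0 < β)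
    (c : Fin n → ℝ) (hc : ∀ i, 0 ≤ c i) (hsum : ∑ i, c i = 1)
    (μ : Fin n → EuclideanSpace ℝ (Fin d)) :
    diffEnt (fun t => ∑ i, c i * gaussPdf β (μ i) t) ≥
      (d : ℝ) / 2 * Real.log (4 * π * β ^ 2) -
        ∑ i, c i * Real.log (∑ j, c j * Real.exp (-‖μ i - μ j‖ ^ 2 / (4 * β ^ 2))) := by
  classical
  set S : Fin n → ℝ := fun i => ∑ j, c j * Real.exp (-‖μ i - μ j‖ ^ 2 / (4 * β ^ 2)) with hS
  set g : EuclideanSpace ℝ (Fin d) → ℝ := fun t => ∑ i, c i * gaussPdf β (μ i) t with hg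
  obtain ⟨k, -, hk⟩ : ∃ k ∈ Finset.univ, (0:ℝ) < c k := by
    by_contra h
    push_neg at h
    have h0 : ∑ i, c i ≤ 0 := Finset.sum_nonpos fun i hi => h i hi
    rw [hsum] at h0
    linarith
  set M : ℝ := (2 * π * β ^ 2) ^ (-(d : ℝ) / 2) with hM
  have hMpos : 0 < M := Real.rpow_pos_of_pos (by positivity) _
  have hgpos : ∀ t, 0 < g t := fun t =>
    Finset.sum_pos' (fun i _ => mul_nonneg (hc i) (gaussPdf_pos hβ _ t).le)
      ⟨k, Finset.mem_univ k, mul_pos hk (gaussPdf_pos hβ _ t)⟩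
  have hgle : ∀ t, g t ≤ M := by
    intro t
    calc g t ≤ ∑ i, c i * M := Finset.sum_le_sum fun i _ =>
          mul_le_mul_of_nonneg_left (gaussPdf_le hβ _ t) (hc i)
      _ = M := by rw [← Finset.sum_mul, hsum, one_mul]
  have hcont_g : Continuous g := by
    apply continuous_finset_sum
    intro i _
    exact continuous_const.mul (continuous_gaussPdf β (μ i))
  have hcont_log : Continuous fun t => Real.log (g t) :=
    hcont_g.log fun t => (hgpos t).ne'
  set C : ℝ := |Real.log M| + |Real.log (c k)| with hC
  have hlog_bound : ∀ t, |Real.log (g t)| ≤ C + (2 * β ^ 2)⁻¹ * ‖t - μ k‖ ^ 2 := by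
    intro t
    have hq : (0:ℝ) ≤ (2 * β ^ 2)⁻¹ * ‖t - μ k‖ ^ 2 := by positivity
    have hub : Real.log (g t) ≤ Real.log M := Real.log_le_log (hgpos t) (hgle t)
    have h1 : c k * gaussPdf β (μ k) t ≤ g t :=
      Finset.single_le_sum (fun i _ => mul_nonneg (hc i) (gaussPdf_pos hβ _ t).le)
        (Finset.mem_univ k)
    have h2 : Real.log (c k * gaussPdf β (μ k) t) ≤ Real.log (g t) :=
      Real.log_le_log (mul_pos hk (gaussPdf_pos hβ _ t)) h1
    rw [Real.log_mul hk.ne' (gaussPdf_pos hβ _ t).ne', log_gaussPdf hβ] at h2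
    have heq : ‖t - μ k‖ ^ 2 / (2 * β ^ 2) = (2 * β ^ 2)⁻¹ * ‖t - μ k‖ ^ 2 := by ring
    rw [abs_le]
    rw [← hM] at h2
    have heq' : -‖t - μ k‖ ^ 2 / (2 * β ^ 2) = -((2 * β ^ 2)⁻¹ * ‖t - μ k‖ ^ 2) := by ring
    rw [heq'] at h2
    constructor
    · have e1 := neg_abs_le (Real.log (c k))
      have e2 := neg_abs_le (Real.log M)
      rw [hC]
      linarith
    · have e1 := le_abs_self (Real.log M)
      have e2 := abs_nonneg (Real.log (c k))
      rw [hC]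
      linarith
  have hint : ∀ i, Integrable (fun t => gaussPdf β (μ i) t * Real.log (g t)) := by
    intro i
    have hdom : Integrable (fun t : EuclideanSpace ℝ (Fin d) =>
        gaussPdf β (μ i) t * C +
          (2 * β ^ 2)⁻¹ * (M * (‖t - μ k‖ ^ 2 * rexp (-(2 * β ^ 2)⁻¹ * ‖t - μ i‖ ^ 2)))) :=
      ((integrable_gaussPdf hβ (μ i)).mul_const C).add
        (((integrable_sq_norm_sub_mul_rexp (by positivity) (μ k) (μ i)).const_mul M).const_mul _)
    refine hdom.mono (Continuous.aestronglyMeasurable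
      ((continuous_gaussPdf β (μ i)).mul hcont_log)) (Filter.Eventually.of_forall fun t => ?_)
    have hγpos := gaussPdf_pos hβ (μ i) t
    have hγM := gaussPdf_le hβ (μ i) t
    rw [Real.norm_eq_abs, abs_mul, abs_of_nonneg hγpos.le]
    have hb1 : gaussPdf β (μ i) t * |Real.log (g t)| ≤
        gaussPdf β (μ i) t * (C + (2 * β ^ 2)⁻¹ * ‖t - μ k‖ ^ 2) :=
      mul_le_mul_of_nonneg_left (hlog_bound t) hγpos.le
    have hγeq : gaussPdf β (μ i) t = M * rexp (-(2 * β ^ 2)⁻¹ * ‖t - μ i‖ ^ 2) := by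
      rw [gaussPdf_eq, ← hM]
    have hb2 : gaussPdf β (μ i) t * (C + (2 * β ^ 2)⁻¹ * ‖t - μ k‖ ^ 2)
        = gaussPdf β (μ i) t * C +
          (2 * β ^ 2)⁻¹ * (M * (‖t - μ k‖ ^ 2 * rexp (-(2 * β ^ 2)⁻¹ * ‖t - μ i‖ ^ 2))) := by
      rw [mul_add]
      congr 1
      rw [hγeq]
      ring
    rw [Real.norm_eq_abs]
    refine le_trans ?_ (le_abs_self _)
    rw [← hb2]
    exact hb1
  have hgi_int : ∀ i, Integrable (fun t => gaussPdf β (μ i) t * g t) := by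
    intro i
    have : (fun t => gaussPdf β (μ i) t * g t)
        = fun t => ∑ j, c j * (gaussPdf β (μ i) t * gaussPdf β (μ j) t) := by
      funext t
      rw [hg, Finset.mul_sum]
      exact Finset.sum_congr rfl fun j _ => by ring
    rw [this]
    exact integrable_finset_sum _ fun j _ => (integrable_gaussPdf_mul hβ _ _).const_mul (c j)
  set K : ℝ := (4 * π * β ^ 2) ^ (-(d : ℝ) / 2) with hK
  have hKpos : 0 < K := Real.rpow_pos_of_pos (by positivity) _
  have hA : ∀ i, ∫ t, gaussPdf β (μ i) t * g t = K * S i := by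
    intro i
    have h1 : (fun t => gaussPdf β (μ i) t * g t)
        = fun t => ∑ j, c j * (gaussPdf β (μ i) t * gaussPdf β (μ j) t) := by
      funext t
      rw [hg, Finset.mul_sum]
      exact Finset.sum_congr rfl fun j _ => by ring
    rw [h1, integral_finset_sum _ fun j _ => (integrable_gaussPdf_mul hβ _ _).const_mul (c j)]
    simp_rw [integral_const_mul, integral_gaussPdf_mul hβ]
    rw [hS, Finset.mul_sum]
    exact Finset.sum_congr rfl fun j _ => by rw [← hK]; ring
  have hS_pos : ∀ i, 0 < c i → 0 < S i := by
    intro i hci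
    rw [hS]
    refine Finset.sum_pos' (fun j _ => mul_nonneg (hc j) (Real.exp_pos _).le)
      ⟨i, Finset.mem_univ i, mul_pos hci (Real.exp_pos _)⟩
  have hJ : ∀ i, 0 < c i →
      ∫ t, gaussPdf β (μ i) t * Real.log (g t) ≤ Real.log (K * S i) := by
    intro i hci
    have hApos : 0 < K * S i := mul_pos hKpos (hS_pos i hci)
    have hpt : ∀ t, gaussPdf β (μ i) t * Real.log (g t)
        ≤ gaussPdf β (μ i) t * (g t / (K * S i) - 1 + Real.log (K * S i)) := by
      intro t
      refine mul_le_mul_of_nonneg_left ?_ (gaussPdf_pos hβ _ t).le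
      have hlt : Real.log (g t / (K * S i)) ≤ g t / (K * S i) - 1 :=
        Real.log_le_sub_one_of_pos (div_pos (hgpos t) hApos)
      rw [Real.log_div (hgpos t).ne' hApos.ne'] at hlt
      linarith
    have hRHSeq : (fun t => gaussPdf β (μ i) t * (g t / (K * S i) - 1 + Real.log (K * S i)))
        = fun t => (K * S i)⁻¹ * (gaussPdf β (μ i) t * g t)
            + (Real.log (K * S i) - 1) * gaussPdf β (μ i) t := by
      funext t
      field_simp
      ring
    have hRHSint : Integrable (fun t =>
        gaussPdf β (μ i) t * (g t / (K * S i) - 1 + Real.log (K * S i))) := by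
      rw [hRHSeq]
      exact ((hgi_int i).const_mul _).add ((integrable_gaussPdf hβ _).const_mul _)
    calc ∫ t, gaussPdf β (μ i) t * Real.log (g t)
        ≤ ∫ t, gaussPdf β (μ i) t * (g t / (K * S i) - 1 + Real.log (K * S i)) :=
          integral_mono (hint i) hRHSint hpt
      _ = Real.log (K * S i) := by
          rw [hRHSeq, integral_add ((hgi_int i).const_mul _)
            ((integrable_gaussPdf hβ _).const_mul _), integral_const_mul, integral_const_mul,
            hA i, integral_gaussPdf hβ]
          field_simp
          rw [div_self (hS_pos i hci).ne']; ring
  have hsplit : ∫ t, g t * Real.log (g t)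
      = ∑ i, c i * ∫ t, gaussPdf β (μ i) t * Real.log (g t) := by
    have h1 : (fun t => g t * Real.log (g t))
        = fun t => ∑ i, c i * (gaussPdf β (μ i) t * Real.log (g t)) := by
      funext t
      rw [hg, Finset.sum_mul]
      exact Finset.sum_congr rfl fun i _ => by ring
    rw [h1, integral_finset_sum _ fun i _ => (hint i).const_mul (c i)]
    exact Finset.sum_congr rfl fun i _ => integral_const_mul _ _
  have hfin : ∑ i, c i * ∫ t, gaussPdf β (μ i) t * Real.log (g t)
      ≤ ∑ i, c i * (Real.log K + Real.log (S i)) := by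
    refine Finset.sum_le_sum fun i _ => ?_
    rcases eq_or_lt_of_le (hc i) with h | h
    · rw [← h]; simp
    · refine mul_le_mul_of_nonneg_left ?_ h.le
      rw [← Real.log_mul hKpos.ne' (hS_pos i h).ne']
      exact hJ i h
  have hsum2 : ∑ i, c i * (Real.log K + Real.log (S i))
      = Real.log K + ∑ i, c i * Real.log (S i) := by
    simp_rw [mul_add]
    rw [Finset.sum_add_distrib, ← Finset.sum_mul, hsum, one_mul]
  have hlogK : Real.log K = -(d : ℝ) / 2 * Real.log (4 * π * β ^ 2) := by
    rw [hK, Real.log_rpow (by positivity)]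
  rw [ge_iff_le]
  show _ ≤ diffEnt g
  rw [diffEnt, hsplit]
  rw [hsum2, hlogK] at hfin
  linarith
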